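/- If the sequence of quantum operations projects onto a pure state, i.e., for every density matrix ρ and every outcome i with p_i ≠ 0, A_i(ρ)/tr(A_i(ρ)) = |ψ_i⟩⟨ψ_i| with ψ_i independent of ρ, then adding any further coarse-graining leaves observational entropy unchanged: S_{C,C_{n+1}}(ρ) = S_C(ρ). -/

import Mathlib

open scoped Matrix ComplexOrder
set_option linter.unusedSectionVars false

namespace PureProjAux

variable {d : Type*} [Fintype d] [DecidableEq d]

lemma trace_ctm_nonneg (B : Matrix d d ℂ) : 0 ≤ (Bᴴ * B).trace := by
  rw [Matrix.trace]
  refine Finset.sum_nonneg fun j _ => ?_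
  rw [Matrix.diag_apply, Matrix.mul_apply]
  refine Finset.sum_nonneg fun i _ => ?_
  simpa [Matrix.conjTranspose_apply] using star_mul_self_nonneg (B i j)

lemma trace_ctm_eq_zero {B : Matrix d d ℂ} (h : (Bᴴ * B).trace = 0) : B = 0 := by
  rw [Matrix.trace] at h
  have hdiag := (Finset.sum_eq_zero_iff_of_nonneg (fun j _ => ?_)).mp h
  · ext i j
    have := hdiag j (Finset.mem_univ j)
    rw [Matrix.diag_apply, Matrix.mul_apply] at this
    have h2 := (Finset.sum_eq_zero_iff_of_nonneg (fun i _ => ?_)).mp this i (Finset.mem_univ i)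
    · rw [Matrix.conjTranspose_apply] at h2
      rcases mul_eq_zero.mp h2 with h3 | h3
      · simpa using star_eq_zero.mp h3
      · exact h3
    · simpa [Matrix.conjTranspose_apply] using star_mul_self_nonneg (B i j)
  · rw [Matrix.diag_apply, Matrix.mul_apply]
    refine Finset.sum_nonneg fun i _ => ?_
    simpa [Matrix.conjTranspose_apply] using star_mul_self_nonneg (B i j)

open scoped MatrixOrder Matrix.Norms.L2Operator in
lemma psd_trace_nonneg {N : Matrix d d ℂ} (h : N.PosSemidef) : 0 ≤ N.trace := by
  obtain ⟨C, rfl⟩ := CStarAlgebra.nonneg_iff_eq_star_mul_self.mp h.nonneg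
  exact trace_ctm_nonneg C

open scoped MatrixOrder Matrix.Norms.L2Operator in
lemma psd_trace_zero {N : Matrix d d ℂ} (h : N.PosSemidef) (h0 : N.trace = 0) : N = 0 := by
  obtain ⟨C, rfl⟩ := CStarAlgebra.nonneg_iff_eq_star_mul_self.mp h.nonneg
  rw [trace_ctm_eq_zero h0]
  simp

lemma kraus_psd {M : Type*} [Fintype M] (K : M → Matrix d d ℂ) {X : Matrix d d ℂ}
    (hX : X.PosSemidef) : (∑ m, K m * X * (K m)ᴴ).PosSemidef := by
  refine Finset.sum_induction _ _ (fun a b ha hb => ha.add hb) Matrix.PosSemidef.zero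
    (fun m _ => ?_)
  simpa using hX.mul_mul_conjTranspose_same (K m)

lemma trace_sum_kraus {κ M' : Type*} [Fintype κ] [Fintype M'] (L : κ → M' → Matrix d d ℂ)
    (hL : ∑ j, ∑ m, (L j m)ᴴ * L j m = 1) (X : Matrix d d ℂ) :
    ∑ j, (∑ m, L j m * X * (L j m)ᴴ).trace = X.trace := by
  have : ∀ j m, (L j m * X * (L j m)ᴴ).trace = ((L j m)ᴴ * L j m * X).trace := fun j m =>
    Matrix.trace_mul_cycle (L j m) X (L j m)ᴴ
  simp_rw [Matrix.trace_sum, this, ← Matrix.trace_sum, ← Matrix.sum_mul, hL, Matrix.one_mul]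

end PureProjAux

open PureProjAux

theorem pure_projection_additional_cg_no_change
    {d ι κ M M' : Type*} [Fintype d] [DecidableEq d]
    [Fintype ι] [Fintype κ] [Fintype M] [Fintype M']
    (K : ι → M → Matrix d d ℂ)
    (L : κ → M' → Matrix d d ℂ)
    (hKcomp : ∑ i, ∑ m, (K i m)ᴴ * K i m = (1 : Matrix d d ℂ))
    (hLcomp : ∑ j, ∑ m, (L j m)ᴴ * L j m = (1 : Matrix d d ℂ))
    (A : ι → Matrix d d ℂ → Matrix d d ℂ)
    (B : κ → Matrix d d ℂ → Matrix d d ℂ)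
    (hA : ∀ i X, A i X = ∑ m, K i m * X * (K i m)ᴴ)
    (hB : ∀ j X, B j X = ∑ m, L j m * X * (L j m)ᴴ)
    (ψ : ι → d → ℂ)
    (hpure : ∀ σ : Matrix d d ℂ, σ.PosSemidef → σ.trace = 1 →
      ∀ i, (A i σ).trace ≠ 0 →
        A i σ = (A i σ).trace • Matrix.vecMulVec (ψ i) (star (ψ i)))
    (ρ : Matrix d d ℂ) (hρ : ρ.PosSemidef) (hρ1 : ρ.trace = 1) :
    -∑ i, ∑ j, (B j (A i ρ)).trace.re *
        Real.log ((B j (A i ρ)).trace.re / (B j (A i 1)).trace.re)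
      = -∑ i, (A i ρ).trace.re * Real.log ((A i ρ).trace.re / (A i 1).trace.re) := by
  classical
  have hd : Nonempty d := by
    by_contra h
    rw [not_nonempty_iff] at h
    rw [Matrix.trace] at hρ1
    simp [Finset.univ_eq_empty] at hρ1
  have hTP : ∀ X : Matrix d d ℂ, ∑ j, (B j X).trace = X.trace := fun X => by
    simp_rw [hB]; exact trace_sum_kraus L hLcomp X
  rw [neg_inj]
  refine Finset.sum_congr rfl fun i _ => ?_
  by_cases hp : (A i ρ).trace = 0
  · have hAρ0 : A i ρ = 0 := by
      refine psd_trace_zero ?_ hp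
      rw [hA]; exact kraus_psd _ hρ
    have hBz : ∀ j, B j (A i ρ) = 0 := fun j => by rw [hAρ0, hB]; simp
    simp [hBz, hp]
  · set P : Matrix d d ℂ := Matrix.vecMulVec (ψ i) (star (ψ i)) with hPdef
    have hPeq : P = (Matrix.replicateRow (Fin 1) (star (ψ i)))ᴴ * (Matrix.replicateRow (Fin 1) (star (ψ i))) := by
      ext a b
      simp [hPdef, Matrix.mul_apply, Matrix.vecMulVec_apply, Matrix.replicateRow_apply,
        Matrix.conjTranspose_apply, Finset.univ_unique, Finset.sum_singleton]
    have hPpsd : P.PosSemidef := hPeq ▸ Matrix.posSemidef_conjTranspose_mul_self _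
    have hAρpsd : (A i ρ).PosSemidef := by rw [hA]; exact kraus_psd _ hρ
    have hA1psd : (A i 1).PosSemidef := by rw [hA]; exact kraus_psd _ Matrix.PosSemidef.one
    -- V ≠ 0
    have hV0 : (A i 1).trace ≠ 0 := by
      intro h0
      apply hp
      have h0' : ∑ m, ((K i m)ᴴᴴ * (K i m)ᴴ).trace = 0 := by
        rw [← Matrix.trace_sum,
          show (∑ m, (K i m)ᴴᴴ * (K i m)ᴴ) = A i 1 by rw [hA]; simp, h0]
      have hKm : ∀ m, K i m = 0 := by
        intro m
        have h1 := (Finset.sum_eq_zero_iff_of_nonneg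
          (fun m _ => trace_ctm_nonneg ((K i m)ᴴ))).mp h0' m (Finset.mem_univ m)
        have h2 := trace_ctm_eq_zero h1
        simpa using h2
      rw [hA]
      simp [hKm]
    -- the uniform state
    have hcard : ((Fintype.card d : ℕ) : ℂ) ≠ 0 := Nat.cast_ne_zero.mpr Fintype.card_ne_zero
    set c : ℂ := ((Fintype.card d : ℕ) : ℂ)⁻¹ with hcdef
    have hc0 : c ≠ 0 := inv_ne_zero hcard
    have hσpsd : (c • (1 : Matrix d d ℂ)).PosSemidef := by
      have h1 : c • (1 : Matrix d d ℂ) = Matrix.diagonal (fun _ => c) := by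
        ext a b
        by_cases hab : a = b <;> simp [Matrix.one_apply, Matrix.diagonal, hab]
      rw [h1]
      refine Matrix.posSemidef_diagonal_iff.mpr fun _ => ?_
      have h2 := Complex.zero_le_real.mpr
        (inv_nonneg.mpr (Nat.cast_nonneg (α := ℝ) (Fintype.card d)))
      rw [hcdef]
      simpa using h2
    have hσtr : (c • (1 : Matrix d d ℂ)).trace = 1 := by
      rw [Matrix.trace_smul, Matrix.trace_one, smul_eq_mul, hcdef]
      exact inv_mul_cancel₀ hcard
    have hσA : A i (c • (1 : Matrix d d ℂ)) = c • A i 1 := by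
      rw [hA, hA]
      simp [Matrix.mul_smul, Matrix.smul_mul, Finset.smul_sum]
    have hσtrace : (A i (c • (1 : Matrix d d ℂ))).trace = c * (A i 1).trace := by
      rw [hσA, Matrix.trace_smul, smul_eq_mul]
    have hσne : (A i (c • (1 : Matrix d d ℂ))).trace ≠ 0 := by
      rw [hσtrace]; exact mul_ne_zero hc0 hV0
    have hA1 : A i 1 = (A i 1).trace • P := by
      have h := hpure (c • 1) hσpsd hσtr i hσne
      rw [hσA, Matrix.trace_smul, smul_eq_mul] at h
      have h2 := congrArg (fun X => c⁻¹ • X) h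
      simpa [smul_smul, ← mul_assoc, inv_mul_cancel₀ hc0] using h2
    have hAρ : A i ρ = (A i ρ).trace • P := hpure ρ hρ hρ1 i hp
    -- trace of P is 1
    have hPtr : P.trace = 1 := by
      have h := congrArg Matrix.trace hAρ
      rw [Matrix.trace_smul, smul_eq_mul] at h
      exact (mul_left_cancel₀ hp (by rw [← h, mul_one])).symm
    -- linearity of B
    have hBlin : ∀ j (t : ℂ) (X : Matrix d d ℂ), B j (t • X) = t • B j X := fun j t X => by
      rw [hB, hB]
      simp [Matrix.mul_smul, Matrix.smul_mul, Finset.smul_sum]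
    have htrρ : ∀ j, (B j (A i ρ)).trace = (A i ρ).trace * (B j P).trace := fun j => by
      conv_lhs => rw [hAρ]
      rw [hBlin, Matrix.trace_smul, smul_eq_mul]
    have htr1 : ∀ j, (B j (A i 1)).trace = (A i 1).trace * (B j P).trace := fun j => by
      conv_lhs => rw [hA1]
      rw [hBlin, Matrix.trace_smul, smul_eq_mul]
    -- nonnegativity facts
    have hpnn : 0 ≤ (A i ρ).trace := psd_trace_nonneg hAρpsd
    have hvnn : 0 ≤ (A i 1).trace := psd_trace_nonneg hA1psd
    have hqnn : ∀ j, 0 ≤ (B j P).trace := fun j =>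
      psd_trace_nonneg (by rw [hB]; exact kraus_psd _ hPpsd)
    have hpim : (A i ρ).trace.im = 0 := ((Complex.le_def.mp hpnn).2).symm
    have hvim : (A i 1).trace.im = 0 := ((Complex.le_def.mp hvnn).2).symm
    have hqim : ∀ j, (B j P).trace.im = 0 := fun j => ((Complex.le_def.mp (hqnn j)).2).symm
    have hqre : ∀ j, 0 ≤ (B j P).trace.re := fun j => (Complex.le_def.mp (hqnn j)).1
    -- sum of q is 1
    have hq1 : ∑ j, (B j P).trace = 1 := by rw [hTP P, hPtr]
    have hq1re : ∑ j, (B j P).trace.re = 1 := by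
      have := congrArg Complex.re hq1
      rwa [Complex.re_sum] at this
    set pr : ℝ := (A i ρ).trace.re with hprdef
    set vr : ℝ := (A i 1).trace.re with hvrdef
    have hre : ∀ j, (B j (A i ρ)).trace.re = pr * (B j P).trace.re := fun j => by
      rw [htrρ j, Complex.mul_re, hpim, hprdef]
      ring
    have hre1 : ∀ j, (B j (A i 1)).trace.re = vr * (B j P).trace.re := fun j => by
      rw [htr1 j, Complex.mul_re, hvim, hvrdef]
      ring
    calc ∑ j, (B j (A i ρ)).trace.re *
          Real.log ((B j (A i ρ)).trace.re / (B j (A i 1)).trace.re)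
        = ∑ j, (pr * (B j P).trace.re) * Real.log (pr / vr) := by
          refine Finset.sum_congr rfl fun j _ => ?_
          rw [hre j, hre1 j]
          by_cases hq : (B j P).trace.re = 0
          · simp [hq]
          · rw [mul_div_mul_right _ _ hq]
      _ = pr * Real.log (pr / vr) := by
          rw [← Finset.sum_mul, ← Finset.mul_sum, hq1re, mul_one]
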